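/- Let K ⊆ ℝⁿ be a convex body and let z₀ be the midpoint of a segment contained in K whose length equals diam(K). Then α(K^{z₀}) ≤ 8/diam(K). In particular, inf_{z ∈ ℝⁿ} α(K^z) ≤ 8/diam(K) in every dimension. -/

import Mathlib

open scoped ENNReal RealInnerProductSpace Pointwise

noncomputable section

variable {E : Type*} [NormedAddCommGroup E] [InnerProductSpace ℝ E]

/-- The polar body of `K` with respect to the point `z`:
`K^z = {y : ∀ x ∈ K, ⟪x - z, y⟫ ≤ 1}`. -/
def polarBody (K : Set E) (z : E) : Set E :=
  {y | ∀ x ∈ K, ⟪x - z, y⟫ ≤ (1 : ℝ)}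

/-- `q : ZMod m → E` is a closed generalized billiard trajectory of `K`:
the `q i` are points of `∂K`, consecutive points are distinct, and at each point the
change of (unit) direction is `-lam • nv` for some `lam > 0` and outer unit normal `nv`
of a supporting hyperplane of `K` at that point. -/
def IsClosedBilliardTraj (K : Set E) {m : ℕ} [NeZero m] (q : ZMod m → E) : Prop :=
  2 ≤ m ∧ (∀ i, q i ∈ frontier K) ∧ (∀ i : ZMod m, q (i + 1) ≠ q i) ∧
    ∀ i : ZMod m, ∃ (lam : ℝ) (nv : E), 0 < lam ∧ ‖nv‖ = 1 ∧
      (∀ x ∈ K, ⟪x - q i, nv⟫ ≤ (0 : ℝ)) ∧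
      ‖q (i + 1) - q i‖⁻¹ • (q (i + 1) - q i)
        - ‖q i - q (i - 1)‖⁻¹ • (q i - q (i - 1)) = -(lam • nv)

/-- The length (perimeter) of a closed polygonal trajectory. -/
def billiardLength {m : ℕ} [NeZero m] (q : ZMod m → E) : ℝ :=
  ∑ i : ZMod m, ‖q (i + 1) - q i‖

/-- `α(K)`: the infimum of the lengths of the closed generalized billiard trajectories
inside `K`, equal to `∞` if there are none. -/
def alpha (K : Set E) : ℝ≥0∞ :=
  ⨅ (m : ℕ) (_ : NeZero m) (q : ZMod m → E) (_ : IsClosedBilliardTraj K q),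
    ENNReal.ofReal (billiardLength q)

/-- The billiard product `β(K) = inf_z α(K) · α(K^z)`. -/
def billiardProduct (K : Set E) : ℝ≥0∞ :=
  ⨅ z : E, alpha K * alpha (polarBody K z)

lemma alpha_le_traj {K : Set E} {m : ℕ} [inst : NeZero m] {q : ZMod m → E}
    (h : IsClosedBilliardTraj K q) :
    alpha K ≤ ENNReal.ofReal (billiardLength q) :=
  iInf_le_of_le m (iInf_le_of_le inst (iInf_le_of_le q (iInf_le _ h)))

set_option maxHeartbeats 1000000

/-- In every dimension, if `z₀` is the midpoint of a diameter of the convex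
body `K`, then `α(K^{z₀}) ≤ 8 / diam K`; in particular `inf_z α(K^z) ≤ 8 / diam K`. -/
theorem alpha_polar_midpoint_diameter_le {n : ℕ} (K : Set (EuclideanSpace ℝ (Fin n)))
    (hKconv : Convex ℝ K) (hKcomp : IsCompact K) (hKint : (interior K).Nonempty)
    (x y : EuclideanSpace ℝ (Fin n)) (hx : x ∈ K) (hy : y ∈ K)
    (hxy : dist x y = Metric.diam K) :
    alpha (polarBody K (midpoint ℝ x y)) ≤ 8 / ENNReal.ofReal (Metric.diam K) ∧
      (⨅ z : EuclideanSpace ℝ (Fin n), alpha (polarBody K z))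
        ≤ 8 / ENNReal.ofReal (Metric.diam K) := by
  rcases (Metric.diam_nonneg (s := K)).eq_or_lt with h0 | hdpos
  · have hz : ENNReal.ofReal (Metric.diam K) = 0 := by simp [← h0]
    rw [hz, ENNReal.div_zero (by norm_num)]
    exact ⟨le_top, le_top⟩
  suffices h1 : alpha (polarBody K (midpoint ℝ x y)) ≤ 8 / ENNReal.ofReal (Metric.diam K) by
    exact ⟨h1, le_trans (iInf_le _ (midpoint ℝ x y)) h1⟩
  set d := Metric.diam K with hdd
  set z₀ := midpoint ℝ x y with hz₀
  set u : EuclideanSpace ℝ (Fin n) := y - x with hu'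
  have hu : ‖u‖ = d := by rw [hu', ← dist_eq_norm, dist_comm]; exact hxy
  have huu : ⟪u, u⟫ = d ^ 2 := by rw [real_inner_self_eq_norm_sq, hu]
  have hd0 : d ≠ 0 := ne_of_gt hdpos
  have hune : u ≠ 0 := fun h => hd0 (by rw [h, norm_zero] at hu; exact hu.symm)
  have hyz : y - z₀ = (2⁻¹ : ℝ) • u := by
    rw [hz₀, hu', midpoint_eq_smul_add, invOf_eq_inv]; module
  have hxz : x - z₀ = -((2⁻¹ : ℝ) • u) := by
    rw [hz₀, hu', midpoint_eq_smul_add, invOf_eq_inv]; module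
  set c : ℝ := 2 / d ^ 2 with hc
  have hcpos : 0 < c := by rw [hc]; positivity
  set q0 : EuclideanSpace ℝ (Fin n) := c • u with hq0
  have hq0ne : q0 ≠ 0 := smul_ne_zero (ne_of_gt hcpos) hune
  set S := polarBody K z₀ with hS
  -- distance bound inside K
  have hdist : ∀ p ∈ K, ∀ w ∈ K, ‖p - w‖ ≤ d := fun p hp w hw => by
    rw [← dist_eq_norm]; exact Metric.dist_le_diam_of_mem hKcomp.isBounded hp hw
  -- the key inner product estimates
  have key : ∀ p ∈ K, ⟪p - z₀, u⟫ ≤ d ^ 2 / 2 ∧ -(d ^ 2 / 2) ≤ ⟪p - z₀, u⟫ := by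
    intro p hp
    have h1 : ⟪p - x, u⟫ ≤ d ^ 2 := by
      calc ⟪p - x, u⟫ ≤ ‖p - x‖ * ‖u‖ := real_inner_le_norm _ _
        _ ≤ d * d := by
            rw [hu]; exact mul_le_mul_of_nonneg_right (hdist p hp x hx) hdpos.le
        _ = d ^ 2 := (sq d).symm
    have h3 : ⟪y - p, u⟫ ≤ d ^ 2 := by
      calc ⟪y - p, u⟫ ≤ ‖y - p‖ * ‖u‖ := real_inner_le_norm _ _
        _ ≤ d * d := by
            rw [hu]; exact mul_le_mul_of_nonneg_right (hdist y hy p hp) hdpos.le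
        _ = d ^ 2 := (sq d).symm
    have h2 : -(d ^ 2) ≤ ⟪p - y, u⟫ := by
      have e : (y - p : EuclideanSpace ℝ (Fin n)) = -(p - y) := by abel
      rw [e, inner_neg_left] at h3
      linarith
    constructor
    · have e : p - z₀ = (p - x) + (x - z₀) := by abel
      rw [e, inner_add_left, hxz, inner_neg_left, real_inner_smul_left, huu]
      linarith
    · have e : p - z₀ = (p - y) + (y - z₀) := by abel
      rw [e, inner_add_left, hyz, real_inner_smul_left, huu]
      linarith
  -- membership of ±q0 in the polar body
  have hq0S : q0 ∈ S := by
    intro p hp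
    rw [hq0, real_inner_smul_right]
    calc c * ⟪p - z₀, u⟫ ≤ c * (d ^ 2 / 2) :=
          mul_le_mul_of_nonneg_left (key p hp).1 hcpos.le
      _ = 1 := by rw [hc]; field_simp
  have hq0S' : -q0 ∈ S := by
    intro p hp
    rw [inner_neg_right, hq0, real_inner_smul_right]
    calc -(c * ⟪p - z₀, u⟫) ≤ -(c * (-(d ^ 2 / 2))) := by
          exact neg_le_neg (mul_le_mul_of_nonneg_left (key p hp).2 hcpos.le)
      _ = 1 := by rw [hc]; field_simp
  -- ±q0 are not interior points of the polar body
  have hiu : ⟪u, q0⟫ = 2 := by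
    rw [hq0, real_inner_smul_right, huu, hc]; field_simp
  have hiu2 : ⟪q0, u⟫ = 2 := by
    rw [hq0, real_inner_smul_left, huu, hc]; field_simp
  have hfr1 : q0 ∉ interior S := by
    intro h
    rw [mem_interior_iff_mem_nhds, Metric.mem_nhds_iff] at h
    obtain ⟨ε, hε, hball⟩ := h
    have hpS : q0 + (ε / (2 * d)) • u ∈ S := by
      apply hball
      rw [Metric.mem_ball, dist_eq_norm, add_sub_cancel_left, norm_smul, hu,
        Real.norm_eq_abs, abs_of_pos (by positivity)]
      have he : ε / (2 * d) * d = ε / 2 := by field_simp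
      rw [he]; linarith
    have h2 := hpS y hy
    rw [hyz, inner_add_right, real_inner_smul_left, real_inner_smul_left, hiu,
      real_inner_smul_right, huu] at h2
    have hpos : 0 < ε / (2 * d) * d ^ 2 := by positivity
    nlinarith
  have hfr2 : -q0 ∉ interior S := by
    intro h
    rw [mem_interior_iff_mem_nhds, Metric.mem_nhds_iff] at h
    obtain ⟨ε, hε, hball⟩ := h
    have hpS : -q0 - (ε / (2 * d)) • u ∈ S := by
      apply hball
      rw [Metric.mem_ball, dist_eq_norm, sub_sub_cancel_left, norm_neg, norm_smul, hu,
        Real.norm_eq_abs, abs_of_pos (by positivity)]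
      have he : ε / (2 * d) * d = ε / 2 := by field_simp
      rw [he]; linarith
    have h2 := hpS x hx
    rw [hxz, inner_neg_left, real_inner_smul_left, inner_sub_right, inner_neg_right,
      hiu, real_inner_smul_right, huu] at h2
    have hpos : 0 < ε / (2 * d) * d ^ 2 := by positivity
    nlinarith
  -- the trajectory
  set qtraj : ZMod 2 → EuclideanSpace ℝ (Fin n) := fun i => if i = 0 then q0 else -q0
    with hqt
  have hqt0 : qtraj 0 = q0 := if_pos rfl
  have hqt1 : qtraj 1 = -q0 := if_neg (by decide)
  have e01 : (0 : ZMod 2) + 1 = 1 := by decide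
  have e11 : (1 : ZMod 2) + 1 = 0 := by decide
  have e0m : (0 : ZMod 2) - 1 = 1 := by decide
  have e1m : (1 : ZMod 2) - 1 = 0 := by decide
  have hcases : ∀ i : ZMod 2, i = 0 ∨ i = 1 := by decide
  -- norms along the trajectory
  have en1 : -q0 - q0 = (-(2 * c)) • u := by rw [hq0]; module
  have en2 : q0 - -q0 = (2 * c) • u := by rw [hq0]; module
  have n1 : ‖-q0 - q0‖ = 4 / d := by
    rw [en1, norm_smul, hu, Real.norm_eq_abs, abs_neg, abs_of_pos (by positivity), hc]
    field_simp; ring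
  have n2 : ‖q0 - -q0‖ = 4 / d := by
    rw [en2, norm_smul, hu, Real.norm_eq_abs, abs_of_pos (by positivity), hc]
    field_simp; ring
  have hnv : ‖(d⁻¹ : ℝ) • u‖ = 1 := by
    rw [norm_smul, hu, Real.norm_eq_abs, abs_of_pos (by positivity)]
    exact inv_mul_cancel₀ hd0
  have htraj : IsClosedBilliardTraj S qtraj := by
    refine ⟨le_refl 2, ?_, ?_, ?_⟩
    · intro i
      rcases hcases i with rfl | rfl
      · rw [hqt0]; exact ⟨subset_closure hq0S, hfr1⟩
      · rw [hqt1]; exact ⟨subset_closure hq0S', hfr2⟩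
    · have hne : -q0 ≠ q0 := by
        intro h
        apply hq0ne
        have h2 : (2 : ℝ) • q0 = 0 := by
          rw [two_smul]; exact neg_eq_iff_add_eq_zero.mp h
        rcases smul_eq_zero.mp h2 with h3 | h3
        · norm_num at h3
        · exact h3
      intro i
      rcases hcases i with rfl | rfl
      · rw [e01, hqt0, hqt1]; exact hne
      · rw [e11, hqt0, hqt1]; exact fun h => hne h.symm
    · intro i
      rcases hcases i with rfl | rfl
      · refine ⟨2, (d⁻¹ : ℝ) • u, by norm_num, hnv, ?_, ?_⟩
        · intro p hp
          have h2 : ⟪y - z₀, p⟫ ≤ 1 := hp y hy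
          rw [hyz, real_inner_smul_left] at h2
          rw [hqt0]
          have he : ⟪p - q0, (d⁻¹ : ℝ) • u⟫ = d⁻¹ * (⟪p, u⟫ - 2) := by
            rw [real_inner_smul_right, inner_sub_left, hiu2]
          rw [he]
          apply mul_nonpos_of_nonneg_of_nonpos (by positivity)
          have hcm := real_inner_comm u p
          linarith
        · rw [e01, e0m, hqt0, hqt1, n1, n2, en1, en2, smul_smul, smul_smul, smul_smul]
          match_scalars
          all_goals (field_simp [hc]; try ring)
          all_goals (rw [hc]; field_simp; norm_num)
      · refine ⟨2, -((d⁻¹ : ℝ) • u), by norm_num, by rw [norm_neg]; exact hnv, ?_, ?_⟩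
        · intro p hp
          have h2 : ⟪x - z₀, p⟫ ≤ 1 := hp x hx
          rw [hxz, inner_neg_left, real_inner_smul_left] at h2
          rw [hqt1]
          have he : ⟪p - -q0, -((d⁻¹ : ℝ) • u)⟫ = -(d⁻¹ * (⟪p, u⟫ + 2)) := by
            rw [inner_neg_right, real_inner_smul_right, inner_sub_left, inner_neg_left,
              hiu2]
            ring
          rw [he]
          have hcm := real_inner_comm u p
          have hnn : (0:ℝ) ≤ d⁻¹ * (⟪p, u⟫ + 2) :=
            mul_nonneg (by positivity) (by linarith)
          linarith
        · rw [e11, e1m, hqt0, hqt1, n1, n2, en1, en2, smul_smul, smul_smul, smul_neg,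
            smul_smul]
          match_scalars
          all_goals (field_simp [hc]; try ring)
          all_goals (rw [hc]; field_simp; norm_num)
  have hlen : billiardLength qtraj = 8 / d := by
    have hsum : ∑ i : ZMod 2, ‖qtraj (i + 1) - qtraj i‖
        = ‖qtraj (0 + 1) - qtraj 0‖ + ‖qtraj (1 + 1) - qtraj 1‖ :=
      Fin.sum_univ_two _
    rw [billiardLength, hsum, e01, e11, hqt0, hqt1, n1, n2]
    ring
  have hfin := alpha_le_traj htraj
  rw [hlen, ENNReal.ofReal_div_of_pos hdpos] at hfin
  calc alpha S ≤ ENNReal.ofReal 8 / ENNReal.ofReal d := hfin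
    _ = 8 / ENNReal.ofReal d := by norm_num
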